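/- Suppose Y0, Y1 are integrable real-valued random variables such that for every real y, either P(Y0 < y ≤ Y1) = 0 or P(Y1 < y ≤ Y0) = 0, and both ∫_ℝ P(Y0 < y ≤ Y1) dy and ∫_ℝ P(Y1 < y ≤ Y0) dy are finite. Then P-ACE = ∫_ℝ max(P(Y0 < y) - P(Y1 < y), 0) dy and N-ACE = ∫_ℝ max(P(Y1 < y) - P(Y0 < y), 0) dy. -/

import Mathlib

open MeasureTheory

lemma stmt9_aux {Ω : Type*} [MeasurableSpace Ω] (μ : Measure Ω) [IsProbabilityMeasure μ]
    (Y0 Y1 : Ω → ℝ) (hY0 : Measurable Y0) (hY1 : Measurable Y1)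
    (hmono : ∀ y : ℝ, μ {ω | Y0 ω < y ∧ y ≤ Y1 ω} = 0 ∨ μ {ω | Y1 ω < y ∧ y ≤ Y0 ω} = 0) :
    (∫⁻ y : ℝ, μ {ω | Y0 ω < y ∧ y ≤ Y1 ω}).toReal
        = ∫ y : ℝ, max ((μ {ω | Y0 ω < y}).toReal - (μ {ω | Y1 ω < y}).toReal) 0 := by
  -- measurability of y ↦ μ P_y
  have hmeasP : Measurable fun y : ℝ => μ {ω | Y0 ω < y ∧ y ≤ Y1 ω} := by
    have hs : MeasurableSet {p : ℝ × Ω | Y0 p.2 < p.1 ∧ p.1 ≤ Y1 p.2} :=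
      (measurableSet_lt (hY0.comp measurable_snd) measurable_fst).inter
        (measurableSet_le measurable_fst (hY1.comp measurable_snd))
    have := measurable_measure_prodMk_left (ν := μ) hs
    exact this
  -- pointwise identity
  have key : ∀ y : ℝ, (μ {ω | Y0 ω < y ∧ y ≤ Y1 ω}).toReal
      = max ((μ {ω | Y0 ω < y}).toReal - (μ {ω | Y1 ω < y}).toReal) 0 := by
    intro y
    have decomp : ∀ (f g : Ω → ℝ), Measurable f → Measurable g →
        μ {ω | f ω < y} = μ {ω | f ω < y ∧ g ω < y} + μ {ω | f ω < y ∧ y ≤ g ω} := by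
      intro f g hf hg
      rw [← measure_union]
      · congr 1
        ext ω
        simp only [Set.mem_setOf_eq, Set.mem_union]
        constructor
        · intro h; rcases lt_or_ge (g ω) y with h' | h' <;> tauto
        · tauto
      · rw [Set.disjoint_left]
        rintro ω ⟨_, h1⟩ ⟨_, h2⟩; exact absurd h2 (not_le.mpr h1)
      · exact (measurableSet_lt hf measurable_const).inter (measurableSet_le measurable_const hg)
    have d0 := decomp Y0 Y1 hY0 hY1
    have d1 := decomp Y1 Y0 hY1 hY0
    have hc : {ω | Y1 ω < y ∧ Y0 ω < y} = {ω | Y0 ω < y ∧ Y1 ω < y} := by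
      ext ω; simp [and_comm]
    rw [hc] at d1
    set a := μ {ω | Y0 ω < y ∧ Y1 ω < y} with ha
    set p := μ {ω | Y0 ω < y ∧ y ≤ Y1 ω} with hp
    set n := μ {ω | Y1 ω < y ∧ y ≤ Y0 ω} with hn
    have hane : a ≠ ⊤ := (measure_lt_top μ _).ne
    have hpne : p ≠ ⊤ := (measure_lt_top μ _).ne
    have hnne : n ≠ ⊤ := (measure_lt_top μ _).ne
    have e0 : (μ {ω | Y0 ω < y}).toReal = a.toReal + p.toReal := by
      rw [d0, ENNReal.toReal_add hane hpne]
    have e1 : (μ {ω | Y1 ω < y}).toReal = a.toReal + n.toReal := by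
      rw [d1, ENNReal.toReal_add hane hnne]
    rw [e0, e1]
    rcases hmono y with h | h
    · rw [← hp] at h
      rw [h]
      simp only [ENNReal.toReal_zero]
      have : a.toReal + 0 - (a.toReal + n.toReal) = -n.toReal := by ring
      rw [this, max_eq_right (neg_nonpos.mpr ENNReal.toReal_nonneg)]
    · rw [← hn] at h
      rw [h]
      simp only [ENNReal.toReal_zero]
      have : a.toReal + p.toReal - (a.toReal + 0) = p.toReal := by ring
      rw [this, max_eq_left ENNReal.toReal_nonneg]
  rw [← integral_toReal hmeasP.aemeasurable
      (Filter.Eventually.of_forall fun y => measure_lt_top μ _)]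
  exact integral_congr_ae (Filter.Eventually.of_forall key)

theorem stmt9 {Ω : Type*} [MeasurableSpace Ω] (μ : Measure Ω) [IsProbabilityMeasure μ]
    (Y0 Y1 : Ω → ℝ) (hY0 : Measurable Y0) (hY1 : Measurable Y1)
    (hi0 : Integrable Y0 μ) (hi1 : Integrable Y1 μ)
    (hmono : ∀ y : ℝ, μ {ω | Y0 ω < y ∧ y ≤ Y1 ω} = 0 ∨ μ {ω | Y1 ω < y ∧ y ≤ Y0 ω} = 0)
    (hP : ∫⁻ y : ℝ, μ {ω | Y0 ω < y ∧ y ≤ Y1 ω} ≠ ⊤)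
    (hN : ∫⁻ y : ℝ, μ {ω | Y1 ω < y ∧ y ≤ Y0 ω} ≠ ⊤) :
    (∫⁻ y : ℝ, μ {ω | Y0 ω < y ∧ y ≤ Y1 ω}).toReal
        = ∫ y : ℝ, max ((μ {ω | Y0 ω < y}).toReal - (μ {ω | Y1 ω < y}).toReal) 0
      ∧ (∫⁻ y : ℝ, μ {ω | Y1 ω < y ∧ y ≤ Y0 ω}).toReal
        = ∫ y : ℝ, max ((μ {ω | Y1 ω < y}).toReal - (μ {ω | Y0 ω < y}).toReal) 0 := by
  exact ⟨stmt9_aux μ Y0 Y1 hY0 hY1 hmono,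
    stmt9_aux μ Y1 Y0 hY1 hY0 (fun y => (hmono y).symm)⟩
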